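/- Let G be a finite connected simple graph. Then the following are equivalent: (1) there exists a function ε : V(G) → {+, −} such that the ε-subgraph G_ε contains a cycle; (2) G contains a cycle of even length. -/

import Mathlib

/-- The ε-subgraph of `G`: the spanning subgraph whose edges are the edges of `G`
whose two endpoints receive different values under `ε`. -/
def epsSubgraph {V : Type*} (G : SimpleGraph V) (ε : V → Bool) : SimpleGraph V where
  Adj u v := G.Adj u v ∧ ε u ≠ ε v
  symm := ⟨fun _ _ h => ⟨h.1.symm, h.2.symm⟩⟩
  loopless := ⟨fun v h => G.loopless.irrefl v h.1⟩

private lemma eps_parity {V : Type*} {G : SimpleGraph V} {ε : V → Bool} :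
    ∀ {u v : V} (p : (epsSubgraph G ε).Walk u v), (ε u = ε v) ↔ Even p.length := by
  intro u v p
  induction p with
  | nil => simp
  | @cons a b c h q ih =>
    have hne : ε a ≠ ε b := h.2
    rw [SimpleGraph.Walk.length_cons, Nat.even_add_one, ← ih]
    revert hne
    cases hεa : ε a <;> cases hεb : ε b <;> cases hεc : ε c <;> simp

private lemma support_getElem' {V : Type*} {G : SimpleGraph V} :
    ∀ {u v : V} (p : G.Walk u v) (i : ℕ) (h : i < p.support.length),
      p.support[i] = p.getVert i := by
  intro u v p
  induction p with
  | nil =>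
    intro i h
    simp only [SimpleGraph.Walk.support_nil, List.length_singleton] at h
    interval_cases i
    simp [SimpleGraph.Walk.getVert]
  | cons hadj q ih =>
    intro i h
    cases i with
    | zero => simp [SimpleGraph.Walk.getVert]
    | succ n =>
      simp only [SimpleGraph.Walk.support_cons, List.getElem_cons_succ,
        SimpleGraph.Walk.getVert_cons_succ]
      exact ih n (by simpa [SimpleGraph.Walk.support_cons] using h)

private lemma mem_edges_getVert {V : Type*} {G : SimpleGraph V} :
    ∀ {u v : V} (p : G.Walk u v) (e : Sym2 V), e ∈ p.edges →
      ∃ i < p.length, e = s(p.getVert i, p.getVert (i + 1)) := by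
  intro u v p
  induction p with
  | nil => intro e he; simp at he
  | cons hadj q ih =>
    intro e he
    rw [SimpleGraph.Walk.edges_cons, List.mem_cons] at he
    rcases he with he | he
    · exact ⟨0, by simp, by simpa [SimpleGraph.Walk.getVert_cons_succ,
        SimpleGraph.Walk.getVert] using he⟩
    · obtain ⟨i, hi, hei⟩ := ih e he
      exact ⟨i + 1, by simpa using Nat.succ_lt_succ hi,
        by simpa [SimpleGraph.Walk.getVert_cons_succ] using hei⟩

theorem stmt0 {V : Type*} [Fintype V] (G : SimpleGraph V) (hG : G.Connected) :
    (∃ ε : V → Bool, ∃ (v : V) (w : (epsSubgraph G ε).Walk v v), w.IsCycle) ↔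
      ∃ (v : V) (w : G.Walk v v), w.IsCycle ∧ Even w.length := by
  classical
  constructor
  · rintro ⟨ε, v, w, hw⟩
    have hle : epsSubgraph G ε ≤ G := fun a b h => h.1
    refine ⟨v, w.mapLe hle, hw.mapLe hle, ?_⟩
    have hlen : (w.mapLe hle).length = w.length :=
      SimpleGraph.Walk.length_mapLe hle w
    rw [hlen]
    exact (eps_parity w).mp rfl
  · rintro ⟨v, w, hw, heven⟩
    set n := w.length with hn
    have hn3 : 3 ≤ n := hw.three_le_length
    set t : List V := w.support.tail with ht
    have htn : t.Nodup := hw.support_nodup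
    have htlen : t.length = n := by
      have := w.length_support
      simp [ht, List.length_tail, this, hn]
    -- The coloring: parity of position in the tail of the support.
    set ε : V → Bool := fun x => decide (Even (t.idxOf x)) with hε
    -- tail entries are getVert (k+1)
    have htget : ∀ k (hk : k < n), t[k]'(htlen ▸ hk) = w.getVert (k + 1) := by
      intro k hk
      have h1 : k + 1 < w.support.length := by
        rw [w.length_support]; omega
      have : t[k]'(htlen ▸ hk) = w.support[k + 1]'h1 := by
        simp [ht, List.getElem_tail]
      rw [this, support_getElem']
    have hidx : ∀ k (hk : k < n), t.idxOf (w.getVert (k + 1)) = k := by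
      intro k hk
      have hk' : k < t.length := htlen ▸ hk
      have := List.Nodup.idxOf_getElem htn k hk'
      rwa [htget k hk] at this
    -- value of ε at getVert j, for 1 ≤ j ≤ n
    have hval : ∀ j, 1 ≤ j → j ≤ n → ε (w.getVert j) = decide (Even (j - 1)) := by
      intro j h1 h2
      have : j - 1 < n := by omega
      have h3 : j - 1 + 1 = j := by omega
      rw [hε]
      simp only
      rw [← h3, hidx (j - 1) this]
      simp
    have hval0 : ε (w.getVert 0) = decide (Even (n - 1)) := by
      have h0 : w.getVert 0 = v := w.getVert_zero
      have hnn : w.getVert n = v := by rw [hn]; exact w.getVert_length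
      rw [h0, ← hnn]
      exact hval n (by omega) le_rfl
    -- all edges of w lie in the eps-subgraph
    have hedges : ∀ e ∈ w.edges, e ∈ (epsSubgraph G ε).edgeSet := by
      intro e he
      obtain ⟨i, hi, hei⟩ := mem_edges_getVert w e he
      have hadj : G.Adj (w.getVert i) (w.getVert (i + 1)) :=
        w.adj_getVert_succ hi
      have hne : ε (w.getVert i) ≠ ε (w.getVert (i + 1)) := by
        have hvi1 : ε (w.getVert (i + 1)) = decide (Even i) := by
          simpa using hval (i + 1) (by omega) (by omega)
        rcases Nat.eq_zero_or_pos i with h0 | hpos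
        · subst h0
          rw [hval0, hvi1]
          have hodd : ¬ Even (n - 1) := by
            obtain ⟨m, hm⟩ := heven
            rintro ⟨k, hk⟩
            omega
          simp [hodd]
        · rw [hval i hpos (by omega), hvi1]
          simp only [ne_eq, decide_eq_decide]
          intro hcontra
          have h3 : i - 1 + 1 = i := by omega
          have h4 := Nat.even_add_one (n := i - 1)
          rw [h3] at h4
          tauto
      rw [hei]
      exact ⟨hadj, hne⟩
    exact ⟨ε, v, w.transfer _ hedges, hw.transfer hedges⟩
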